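/- Let I be a graded-nil two-sided homogeneous ideal of a G-graded ring R. Then every graded-regular element of R/I lifts to a graded-regular element of R: if x ∈ R_g satisfies x ≡ x y x (mod I) for some y ∈ R_{g⁻¹}, then there exists a graded-regular z ∈ R_g with z − x ∈ I. -/

import Mathlib

open Polynomial

private lemma aux_poly (k : ℕ) : ∃ F p a : Polynomial ℤ,
    F = X + (X^2 - X) * p ∧ F^2 = F + (X^2 - X)^(2^k) * a := by
  induction k with
  | zero =>
    refine ⟨X, 0, 1, by ring, ?_⟩
    norm_num
  | succ k ih =>
    obtain ⟨F, p, a, hFp, hFa⟩ := ih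
    have hk : 0 < 2^k := pow_pos (by norm_num) k
    have h1 : (X^2 - X : Polynomial ℤ) ^ (2^k) = (X^2-X) * (X^2-X)^(2^k - 1) := by
      conv_lhs => rw [show 2^k = (2^k - 1) + 1 from by omega]
      rw [pow_succ']
    have h2 : ((X^2 - X : Polynomial ℤ))^(2^(k+1)) = ((X^2-X)^(2^k))^2 := by
      rw [← pow_mul, pow_succ 2 k]
    refine ⟨3*F^2 - 2*F^3, p + (X^2-X)^(2^k-1) * (a * (1 - 2*F)),
        a^2 * ((1-2*F)^2 - 4), ?_, ?_⟩
    · linear_combination hFp + (1 - 2*F) * hFa + (1-2*F)*a*h1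
    · linear_combination ((1-2*F)^2-4)*(F^2 - F + (X^2-X)^(2^k)*a) * hFa
        - ((1-2*F)^2-4)*a^2 * h2

private lemma aux_geom {R : Type*} [Ring R] (f ν : R) (hνf : ν * f = ν) (M : ℕ) :
    (∑ i ∈ Finset.range (M+1), ν^i) * (f - ν) = f - ν^(M+1) := by
  induction M with
  | zero => simp
  | succ M ih =>
    rw [Finset.sum_range_succ, add_mul, ih]
    have hp : ν^(M+1) * f = ν^(M+1) := by rw [pow_succ, mul_assoc, hνf]
    rw [mul_sub, hp, ← pow_succ]
    abel

private lemma aux_semiconj {R : Type*} [Ring R] (x y : R) (P : Polynomial ℤ) :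
    x * aeval (y*x) P = aeval (x*y) P * x := by
  induction P using Polynomial.induction_on' with
  | add p q hp hq => simp only [map_add, mul_add, add_mul, hp, hq]
  | monomial n a =>
    have h : SemiconjBy x (y*x) (x*y) := by unfold SemiconjBy; rw [mul_assoc]
    have hn : x * (y*x)^n = (x*y)^n * x := h.pow_right n
    simp only [aeval_monomial]
    calc x * (algebraMap ℤ R a * (y*x)^n)
        = algebraMap ℤ R a * (x * (y*x)^n) := by
          rw [← mul_assoc, ← Algebra.commutes a x, mul_assoc]
      _ = algebraMap ℤ R a * (x*y)^n * x := by rw [hn, mul_assoc]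

private lemma aux_mem {G : Type*} [Group G] {R : Type*} [Ring R]
    (𝒜 : G → AddSubgroup R) (h1 : (1:R) ∈ 𝒜 1)
    (hmul : ∀ {g h : G} {a b : R}, a ∈ 𝒜 g → b ∈ 𝒜 h → a * b ∈ 𝒜 (g * h))
    (e : R) (he : e ∈ 𝒜 1) (P : Polynomial ℤ) : aeval e P ∈ 𝒜 1 := by
  induction P using Polynomial.induction_on' with
  | add p q hp hq => simpa using (𝒜 1).add_mem hp hq
  | monomial n a =>
    have hpow : e^n ∈ 𝒜 1 := by
      induction n with
      | zero => simpa using h1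
      | succ n ihn => rw [pow_succ]; simpa using hmul ihn he
    have := (𝒜 1).zsmul_mem hpow a
    simpa [aeval_monomial, zsmul_eq_mul] using this

private lemma aux_pow {G : Type*} [Group G] {R : Type*} [Ring R]
    (𝒜 : G → AddSubgroup R) (h1 : (1:R) ∈ 𝒜 1)
    (hmul : ∀ {g h : G} {a b : R}, a ∈ 𝒜 g → b ∈ 𝒜 h → a * b ∈ 𝒜 (g * h))
    (e : R) (he : e ∈ 𝒜 1) (n : ℕ) : e^n ∈ 𝒜 1 := by
  induction n with
  | zero => simpa using h1
  | succ n ihn => rw [pow_succ]; simpa using hmul ihn he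

/-- An element is homogeneous w.r.t. a grading family `𝒜` if it lies in some component. -/
def Homogeneous {G : Type*} [Group G] {R : Type*} [Ring R]
    (𝒜 : G → AddSubgroup R) (x : R) : Prop := ∃ g, x ∈ 𝒜 g

/-- A graded-regular element: homogeneous `r` with `r = r * a * r` for some homogeneous `a`. -/
def GradedRegular {G : Type*} [Group G] {R : Type*} [Ring R]
    (𝒜 : G → AddSubgroup R) (r : R) : Prop :=
  Homogeneous 𝒜 r ∧ ∃ a : R, Homogeneous 𝒜 a ∧ r = r * a * r

/-- Graded NR-clean: every homogeneous element is a sum of a graded-regular element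
and a homogeneous nilpotent element. -/
def GradedNRClean {G : Type*} [Group G] {R : Type*} [Ring R]
    (𝒜 : G → AddSubgroup R) : Prop :=
  ∀ x : R, Homogeneous 𝒜 x →
    ∃ r n : R, GradedRegular 𝒜 r ∧ Homogeneous 𝒜 n ∧ IsNilpotent n ∧ x = r + n

/-- `𝒜` is a `G`-grading of the ring `R`. -/
structure IsGrading {G : Type*} [Group G] [DecidableEq G] {R : Type*} [Ring R]
    (𝒜 : G → AddSubgroup R) : Prop where
  one_mem : (1 : R) ∈ 𝒜 1
  mul_mem : ∀ {g h : G} {a b : R}, a ∈ 𝒜 g → b ∈ 𝒜 h → a * b ∈ 𝒜 (g * h)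
  isInternal : DirectSum.IsInternal 𝒜

/-- Graded-regular elements lift modulo a graded-nil homogeneous
two-sided ideal. -/

theorem stmt6 {G : Type*} [Group G] [DecidableEq G] {R : Type*} [Ring R]
    (𝒜 : G → AddSubgroup R) (hG : IsGrading 𝒜) (I : TwoSidedIdeal R)
    (hIhom : ∃ S : Set R, (∀ s ∈ S, Homogeneous 𝒜 s) ∧ I = TwoSidedIdeal.span S)
    (hnil : ∀ a ∈ I, Homogeneous 𝒜 a → IsNilpotent a)
    (g : G) (x y : R) (hx : x ∈ 𝒜 g) (hy : y ∈ 𝒜 g⁻¹)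
    (hxy : x - x * y * x ∈ I) :
    ∃ z : R, z ∈ 𝒜 g ∧ GradedRegular 𝒜 z ∧ z - x ∈ I := by
  classical
  set e : R := y * x with he_def
  set e' : R := x * y with he'_def
  have he1 : e ∈ 𝒜 1 := by simpa using hG.mul_mem hy hx
  have he'1 : e' ∈ 𝒜 1 := by simpa using hG.mul_mem hx hy
  -- e^2 - e and e'^2 - e' are homogeneous elements of I, hence nilpotent
  have heI : e^2 - e ∈ I := by
    have h : e^2 - e = -(y * (x - x*y*x)) := by rw [he_def]; noncomm_ring
    rw [h]; exact I.neg_mem (I.mul_mem_left _ _ hxy)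
  have he'I : e'^2 - e' ∈ I := by
    have h : e'^2 - e' = -((x - x*y*x) * y) := by rw [he'_def]; noncomm_ring
    rw [h]; exact I.neg_mem (I.mul_mem_right _ _ hxy)
  have heH : e^2 - e ∈ 𝒜 1 := (𝒜 1).sub_mem (by rw [sq]; simpa using hG.mul_mem he1 he1) he1
  have he'H : e'^2 - e' ∈ 𝒜 1 :=
    (𝒜 1).sub_mem (by rw [sq]; simpa using hG.mul_mem he'1 he'1) he'1
  obtain ⟨m₁, hm₁⟩ := hnil _ heI ⟨1, heH⟩
  obtain ⟨m₂, hm₂⟩ := hnil _ he'I ⟨1, he'H⟩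
  set N := max m₁ m₂ with hN_def
  have hMe : (e^2 - e)^(2^N) = 0 := by
    rw [show 2^N = m₁ + (2^N - m₁) from by have := Nat.lt_two_pow_self (n := N); omega, pow_add, hm₁,
      zero_mul]
  have hMe' : (e'^2 - e')^(2^N) = 0 := by
    rw [show 2^N = m₂ + (2^N - m₂) from by have := Nat.lt_two_pow_self (n := N); omega, pow_add, hm₂,
      zero_mul]
  obtain ⟨F, p, a, hFp, hFa⟩ := aux_poly N
  set f : R := aeval e F with hf_def
  set f' : R := aeval e' F with hf'_def
  set pe : R := aeval e p with hpe_def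
  -- f and f' are idempotents
  have hf2 : f * f = f := by
    have h := congrArg (aeval e) hFa
    simp only [map_add, map_mul, map_pow, map_sub, aeval_X] at h
    rw [hMe, zero_mul, add_zero] at h
    rw [← pow_two]; exact h
  have hf'2 : f' * f' = f' := by
    have h := congrArg (aeval e') hFa
    simp only [map_add, map_mul, map_pow, map_sub, aeval_X] at h
    rw [hMe', zero_mul, add_zero] at h
    rw [← pow_two]; exact h
  have hfe : f = e + (e^2 - e) * pe := by
    have h := congrArg (aeval e) hFp
    simpa only [map_add, map_mul, map_pow, map_sub, aeval_X] using h
  -- commutation facts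
  have hcomm : ∀ P Q : Polynomial ℤ, aeval e P * aeval e Q = aeval e Q * aeval e P := by
    intro P Q; rw [← map_mul, mul_comm, map_mul]
  have hef : e * f = f * e := by
    have := hcomm X F; simpa only [aeval_X] using this
  -- homogeneity of f, f'
  have hfH : f ∈ 𝒜 1 := aux_mem 𝒜 hG.one_mem hG.mul_mem e he1 F
  have hf'H : f' ∈ 𝒜 1 := aux_mem 𝒜 hG.one_mem hG.mul_mem e' he'1 F
  -- the nilpotent part ν and the correction factor c
  set ν : R := f * (f - e) with hν_def
  have hνpow : ν^(2^N) = 0 := by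
    have hFX : F - X = (X^2 - X) * p := by linear_combination hFp
    have hid : (F*(F-X))^(2^N) = (F*p)^(2^N) * (X^2-X)^(2^N) := by
      rw [hFX, show F*((X^2-X)*p) = F*p*(X^2-X) from by ring, mul_pow]
    have h : ν^(2^N) = aeval e ((F*(F-X))^(2^N)) := by
      simp only [hν_def, hf_def, map_pow, map_mul, map_sub, aeval_X]
    rw [h, hid, map_mul]
    simp only [map_pow, map_sub, aeval_X]
    rw [hMe, mul_zero]
  have hν' : ν = f - f * e := by rw [hν_def, mul_sub, hf2]
  have hνf : ν * f = ν := by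
    rw [hν', sub_mul, hf2, mul_assoc, hef, ← mul_assoc, hf2]
  have hfν : f * ν = ν := by rw [hν_def, ← mul_assoc, hf2]
  have hfνc : Commute f ν := by unfold Commute SemiconjBy; rw [hfν, hνf]
  obtain ⟨M₀, hM₀⟩ : ∃ M₀, 2^N = M₀ + 1 :=
    ⟨2^N - 1, by have h0 : 0 < 2^N := pow_pos (by norm_num) N; omega⟩
  set c : R := ∑ i ∈ Finset.range (M₀+1), ν^i with hc_def
  have hcfν : c * (f - ν) = f := by
    rw [hc_def, aux_geom f ν hνf M₀, ← hM₀, hνpow, sub_zero]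
  have hfc : f * c = c * f := by
    rw [hc_def, Finset.mul_sum, Finset.sum_mul]
    exact Finset.sum_congr rfl fun i _ => (hfνc.pow_right i)
  have hfe2 : f * e = f - ν := by rw [hν', sub_sub_cancel]
  have hcf : c * (f * e) = f := by rw [hfe2]; exact hcfν
  -- homogeneity of c
  have hνH : ν ∈ 𝒜 1 := by
    simpa using hG.mul_mem hfH ((𝒜 1).sub_mem hfH he1)
  have hcH : c ∈ 𝒜 1 := by
    rw [hc_def]
    exact AddSubgroup.sum_mem _ fun i _ => aux_pow 𝒜 hG.one_mem hG.mul_mem ν hνH i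
  -- the lift z = x * f
  have hf'x : f' * x = x * f := (aux_semiconj x y F).symm
  have hzH : x * f ∈ 𝒜 g := by simpa using hG.mul_mem hx hfH
  have hwH : c * (f * (y * f')) ∈ 𝒜 g⁻¹ := by
    simpa using hG.mul_mem hcH (hG.mul_mem hfH (hG.mul_mem hy hf'H))
  -- the key regularity computation
  have s1 : f' * (x * f) = x * f := by rw [← mul_assoc, hf'x, mul_assoc, hf2]
  have s2 : y * (x * f) = e * f := by rw [← mul_assoc, ← he_def]
  have s3 : f * (e * f) = f * e := by rw [hef, ← mul_assoc, hf2]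
  have s4 : f * (c * (f * e)) = f := by
    rw [← mul_assoc, hfc, mul_assoc, show f * (f * e) = f * e from by
      rw [← mul_assoc, hf2], hcf]
  have key : (x * f) * (c * (f * (y * f'))) * (x * f) = x * f := by
    simp only [mul_assoc]
    rw [s1, s2, s3, s4]
  -- z - x ∈ I
  have h5 : x * f - x = x * (e^2 - e) * pe + (x * e - x) := by rw [hfe]; noncomm_ring
  have h6 : x * (e^2 - e) * pe ∈ I := I.mul_mem_right _ _ (I.mul_mem_left _ _ heI)
  have h7 : x * e - x ∈ I := by
    have h : x * e - x = -(x - x*y*x) := by rw [he_def]; noncomm_ring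
    rw [h]; exact I.neg_mem hxy
  refine ⟨x * f, hzH, ⟨⟨g, hzH⟩, c * (f * (y * f')), ⟨g⁻¹, hwH⟩, key.symm⟩, ?_⟩
  rw [h5]; exact I.add_mem h6 h7
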